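/- Let f be submodular, S ⊆ N, and Y ⊆ N \ S a set with associated costs c_u ≥ 1 such that Σ_{u ∈ Y} c_u < b and f(S ∪ {u}) − f(S) < (2τ/b)·c_u for every u ∈ Y. Then f(S ∪ Y) − f(S) < 2τ. -/
import Mathlib

lemma submod_marginal_sum {α : Type*} [DecidableEq α] (f : Finset α → ℝ)
    (hsub : ∀ A B : Finset α, f A + f B ≥ f (A ∪ B) + f (A ∩ B))
    (S : Finset α) :
    ∀ Y : Finset α, Disjoint Y S →
      f (S ∪ Y) - f S ≤ ∑ u ∈ Y, (f (insert u S) - f S) := by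
  intro Y
  induction Y using Finset.induction_on with
  | empty => simp
  | @insert a Y' ha ih =>
    intro hd
    have hd' : Disjoint Y' S := hd.mono_left (Finset.subset_insert a Y')
    have haS : a ∉ S := Finset.disjoint_left.mp hd (Finset.mem_insert_self a Y')
    have key := hsub (S ∪ Y') (insert a S)
    have hunion : (S ∪ Y') ∪ insert a S = S ∪ insert a Y' := by
      ext x; simp [Finset.mem_union, Finset.mem_insert]; tauto
    have hinter : (S ∪ Y') ∩ insert a S = S := by
      ext x
      simp only [Finset.mem_inter, Finset.mem_union, Finset.mem_insert]
      constructor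
      · rintro ⟨hx1 | hx1, hx2 | hx2⟩ <;> first
        | assumption
        | (exfalso; subst hx2; exact ha (by simpa using hx1))
        | (exfalso; exact Finset.disjoint_left.mp hd' hx1 (by simpa using hx2))
      · intro hx; exact ⟨Or.inl hx, Or.inr hx⟩
    rw [hunion, hinter] at key
    rw [Finset.sum_insert ha]
    have := ih hd'
    linarith

/-- If every `u ∈ Y` (disjoint from `S`) has marginal value below `(2τ/b)·c_u`
and `∑_{u ∈ Y} c_u < b`, then `f(S ∪ Y) − f(S) < 2τ`. -/
theorem density_threshold_marginal_bound
    {α : Type*} [DecidableEq α] [Fintype α] (f : Finset α → ℝ)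
    (hsub : ∀ A B : Finset α, f A + f B ≥ f (A ∪ B) + f (A ∩ B))
    (τ b : ℝ) (hτ : τ > 0) (hb : b > 0)
    (S Y : Finset α) (hYS : Disjoint Y S)
    (c : α → ℝ) (hc : ∀ u ∈ Y, c u ≥ 1)
    (hcost : ∑ u ∈ Y, c u < b)
    (hrej : ∀ u ∈ Y, f (insert u S) - f S < (2 * τ / b) * c u) :
    f (S ∪ Y) - f S < 2 * τ := by
  have h1 := submod_marginal_sum f hsub S Y hYS
  rcases Y.eq_empty_or_nonempty with rfl | hne
  · simp at h1 ⊢; linarith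
  · have h2 : ∑ u ∈ Y, (f (insert u S) - f S) < ∑ u ∈ Y, (2 * τ / b) * c u :=
      Finset.sum_lt_sum_of_nonempty hne hrej
    have h3 : ∑ u ∈ Y, (2 * τ / b) * c u = (2 * τ / b) * ∑ u ∈ Y, c u := by
      rw [Finset.mul_sum]
    have hpos : 2 * τ / b > 0 := by positivity
    have h4 : (2 * τ / b) * ∑ u ∈ Y, c u ≤ (2 * τ / b) * b :=
      mul_le_mul_of_nonneg_left hcost.le hpos.le
    have h5 : (2 * τ / b) * b = 2 * τ := by field_simp
    linarith
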